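/- arXiv:1604.04521 — 3 statements merged into one kernel-verified Lean document; each statement's English description precedes it below -/
import Mathlib

section
/- Let 1 < p ≤ 2 and for a, b ∈ ℝ set L(a,b) := |a−b|^{p−2}(a−b) (with L(a,a) := 0). Then for all a, b, a', b' ∈ ℝ one has |L(a,b) − L(a',b')| ≤ 4·|a − a' − b + b'|^{p−1}. -/
/-- `L(a,b) = |a-b|^{p-2}(a-b)` (real powers; the convention `L(a,a)=0` holds automatically,
since `0 ^ t = 0` for `t ≠ 0` and the second factor vanishes when `p = 2`). -/
noncomputable def Lf (p a b : ℝ) : ℝ := |a - b| ^ (p - 2) * (a - b)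

/-- Subadditivity of `t ↦ t^s` for `0 ≤ s ≤ 1` on nonnegative reals. -/
lemma rpow_add_le' {s : ℝ} (hs0 : 0 ≤ s) (hs1 : s ≤ 1) {u v : ℝ}
    (hu : 0 ≤ u) (hv : 0 ≤ v) : (u + v) ^ s ≤ u ^ s + v ^ s := by
  have h := NNReal.rpow_add_le_add_rpow u.toNNReal v.toNNReal hs0 hs1
  have := (NNReal.coe_le_coe).2 h
  simpa [NNReal.coe_rpow, Real.coe_toNNReal, hu, hv, Real.toNNReal_add hu hv,
    Real.coe_toNNReal u hu, Real.coe_toNNReal v hv] using this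

noncomputable def gfun (p x : ℝ) : ℝ := |x| ^ (p - 2) * x

lemma gfun_neg (p x : ℝ) : gfun p (-x) = - gfun p x := by
  simp [gfun, abs_neg]

lemma gfun_pos {p x : ℝ} (hx : 0 < x) : gfun p x = x ^ (p - 1) := by
  rw [gfun, abs_of_pos hx, ← Real.rpow_add_one (ne_of_gt hx) (p - 2)]
  congr 1; ring

lemma abs_gfun (p : ℝ) (hp : 1 < p) (x : ℝ) : |gfun p x| = |x| ^ (p - 1) := by
  rcases eq_or_ne x 0 with rfl | hx
  · simp [gfun, Real.zero_rpow (by linarith : p - 1 ≠ 0)]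
  · have h : (0:ℝ) < |x| := abs_pos.2 hx
    rw [gfun, abs_mul, abs_of_nonneg (Real.rpow_nonneg (abs_nonneg x) _),
      ← Real.rpow_add_one (ne_of_gt h) (p - 2)]
    congr 1; ring

lemma gfun_aux1 (p : ℝ) (hp : 1 < p) (hp2 : p ≤ 2) (x y : ℝ) (hx : 0 ≤ x)
    (hy : |y| ≤ x) : |gfun p x - gfun p y| ≤ 2 * |x - y| ^ (p - 1) := by
  have hps : (0:ℝ) < p - 1 := by linarith
  rcases le_or_gt y 0 with hy0 | hy0
  · -- y ≤ 0 : both terms bounded by (x - y)^(p-1)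
    have hxy : 0 ≤ x - y := by linarith
    have habs : |x - y| = x - y := abs_of_nonneg hxy
    have h1 : |gfun p x| ≤ (x - y) ^ (p - 1) := by
      rw [abs_gfun p hp]
      exact Real.rpow_le_rpow (abs_nonneg x) (by rw [abs_of_nonneg hx]; linarith) hps.le
    have h2 : |gfun p y| ≤ (x - y) ^ (p - 1) := by
      rw [abs_gfun p hp]
      exact Real.rpow_le_rpow (abs_nonneg y) (by rw [abs_of_nonpos hy0]; linarith) hps.le
    calc |gfun p x - gfun p y| ≤ |gfun p x| + |gfun p y| := abs_sub _ _
      _ ≤ (x - y) ^ (p - 1) + (x - y) ^ (p - 1) := add_le_add h1 h2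
      _ = 2 * |x - y| ^ (p - 1) := by rw [habs]; ring
  · -- 0 < y ≤ x
    have hyx : y ≤ x := le_trans (le_abs_self y) hy
    have hx0 : 0 < x := lt_of_lt_of_le hy0 hyx
    rw [gfun_pos hx0, gfun_pos hy0, abs_of_nonneg (by linarith : (0:ℝ) ≤ x - y)]
    have hmono : y ^ (p - 1) ≤ x ^ (p - 1) :=
      Real.rpow_le_rpow hy0.le hyx hps.le
    rw [abs_of_nonneg (by linarith)]
    have hsub : x ^ (p - 1) ≤ (x - y) ^ (p - 1) + y ^ (p - 1) := by
      have := rpow_add_le' hps.le (by linarith) (by linarith : (0:ℝ) ≤ x - y) hy0.le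
      simpa using this
    have hrn : 0 ≤ (x - y) ^ (p - 1) := Real.rpow_nonneg (by linarith) _
    linarith

lemma gfun_aux2 (p : ℝ) (hp : 1 < p) (hp2 : p ≤ 2) (x y : ℝ)
    (h : |y| ≤ |x|) : |gfun p x - gfun p y| ≤ 2 * |x - y| ^ (p - 1) := by
  rcases le_or_gt 0 x with hx | hx
  · exact gfun_aux1 p hp hp2 x y hx (by rwa [abs_of_nonneg hx] at h)
  · have := gfun_aux1 p hp hp2 (-x) (-y) (by linarith)
      (by rw [abs_neg]; rwa [abs_of_neg hx] at h)
    rw [gfun_neg, gfun_neg] at this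
    calc |gfun p x - gfun p y| = |-gfun p x - -gfun p y| := by rw [← abs_neg]; ring_nf
      _ ≤ 2 * |(-x) - (-y)| ^ (p - 1) := this
      _ = 2 * |x - y| ^ (p - 1) := by rw [show (-x) - (-y) = -(x - y) by ring, abs_neg]

lemma gfun_key (p : ℝ) (hp : 1 < p) (hp2 : p ≤ 2) (x y : ℝ) :
    |gfun p x - gfun p y| ≤ 2 * |x - y| ^ (p - 1) := by
  rcases le_total |y| |x| with h | h
  · exact gfun_aux2 p hp hp2 x y h
  · have := gfun_aux2 p hp hp2 y x h
    rw [abs_sub_comm] at this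
    rwa [show |y - x| = |x - y| from abs_sub_comm y x] at this

/-- Lemma 2.1: for `1 < p ≤ 2`,
`|L(a,b) − L(a',b')| ≤ 4 |a − a' − b + b'|^{p−1}`. -/
theorem lemma_p_le_two (p : ℝ) (hp : 1 < p) (hp2 : p ≤ 2) (a b a' b' : ℝ) :
    |Lf p a b - Lf p a' b'| ≤ 4 * |a - a' - b + b'| ^ (p - 1) := by
  have h := gfun_key p hp hp2 (a - b) (a' - b')
  have he : (a - b) - (a' - b') = a - a' - b + b' := by ring
  rw [he] at h
  have hL : Lf p a b = gfun p (a - b) := rfl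
  have hL' : Lf p a' b' = gfun p (a' - b') := rfl
  rw [hL, hL']
  have hrn : 0 ≤ |a - a' - b + b'| ^ (p - 1) := Real.rpow_nonneg (abs_nonneg _) _
  linarith
end

section
/- Let p ≥ 2 and for a, b ∈ ℝ set L(a,b) := |a−b|^{p−2}(a−b). There exists a constant c > 0 depending only on p such that for all a, b, a', b' ∈ ℝ: |L(a,b) − L(a',b)| ≤ c·|a−a'|^{p−1} + c·|a−a'|·|a−b|^{p−2}, and |L(a,b) − L(a,b')| ≤ c·|b−b'|^{p−1} + c·|b−b'|·|a−b|^{p−2}. -/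
open Real Filter

lemma hasDerivAt_absq (q : ℝ) (hq : 0 ≤ q) (t : ℝ) :
    HasDerivAt (fun s : ℝ => |s| ^ q * s) ((q + 1) * |t| ^ q) t := by
  rcases eq_or_lt_of_le hq with hq0 | hq0
  · subst hq0
    simp only [Real.rpow_zero, one_mul, zero_add]
    exact hasDerivAt_id t
  rcases lt_trichotomy t 0 with ht | ht | ht
  · have h1 : HasDerivAt (fun s : ℝ => (-s) ^ q * s) ((q + 1) * (-t) ^ q) t := by
      have hin : HasDerivAt (fun s : ℝ => (-s) ^ q) (q * (-t) ^ (q - 1) * (-1)) t := by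
        exact (Real.hasDerivAt_rpow_const (p := q) (Or.inl (by linarith))).comp t (hasDerivAt_neg t)
      have := hin.mul (hasDerivAt_id t)
      refine this.congr_deriv ?_
      have hnt : (0:ℝ) < -t := by linarith
      rw [id]
      have : (-t) ^ (q - 1) * t = -((-t) ^ (q-1) * (-t)) := by ring
      rw [mul_comm (q * (-t) ^ (q - 1) * -1) t]
      have h2 : (-t) ^ (q - 1) * (-t) = (-t) ^ q := by
        rw [← Real.rpow_add_one (ne_of_gt hnt)]
        ring_nf
      nlinarith [h2]
    rw [abs_of_neg ht]
    refine h1.congr_of_eventuallyEq ?_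
    filter_upwards [Filter.Tendsto.eventually_lt_const ht (Filter.tendsto_id (x := nhds t))] with s hs
    simp only [id] at hs; rw [abs_of_neg hs]
  · subst ht
    rw [abs_zero, Real.zero_rpow (ne_of_gt hq0), mul_zero]
    rw [hasDerivAt_iff_tendsto_slope]
    have heq : (fun s : ℝ => |s| ^ q) =ᶠ[nhdsWithin 0 {(0:ℝ)}ᶜ] slope (fun s : ℝ => |s| ^ q * s) 0 := by
      filter_upwards [self_mem_nhdsWithin] with s hs
      simp only [Set.mem_compl_iff, Set.mem_singleton_iff] at hs
      rw [slope_def_field]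
      field_simp
      simp
    refine Filter.Tendsto.congr' heq ?_
    have hc : ContinuousAt (fun s : ℝ => |s| ^ q) 0 := by
      exact (Real.continuousAt_rpow_const _ _ (Or.inr hq)).comp continuous_abs.continuousAt
    simpa [Real.zero_rpow (ne_of_gt hq0)] using hc.tendsto.mono_left nhdsWithin_le_nhds
  · have h1 : HasDerivAt (fun s : ℝ => s ^ q * s) ((q + 1) * t ^ q) t := by
      have hin : HasDerivAt (fun s : ℝ => s ^ q) (q * t ^ (q - 1)) t :=
        Real.hasDerivAt_rpow_const (Or.inl (ne_of_gt ht))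
      have := hin.mul (hasDerivAt_id t)
      refine this.congr_deriv ?_
      rw [id]
      have h2 : t ^ (q - 1) * t = t ^ q := by
        rw [← Real.rpow_add_one (ne_of_gt ht)]; ring_nf
      nlinarith [h2]
    rw [abs_of_pos ht]
    refine h1.congr_of_eventuallyEq ?_
    filter_upwards [Filter.Tendsto.eventually_const_lt ht (Filter.tendsto_id (x := nhds t))] with s hs
    simp only [id] at hs; rw [abs_of_pos hs]

lemma mvt_absq (q : ℝ) (hq : 0 ≤ q) (x y : ℝ) :
    abs (|x| ^ q * x - |y| ^ q * y) ≤ (q + 1) * max |x| |y| ^ q * |x - y| := by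
  have hconv : Convex ℝ (Set.uIcc y x) := convex_uIcc y x
  have hbd : ∀ t ∈ Set.uIcc y x, |t| ≤ max |x| |y| := by
    intro t ht
    rw [Set.uIcc_eq_union] at ht
    rcases ht with ht | ht
    · rcases ht with ⟨h1, h2⟩
      exact (abs_le_max_abs_abs h1 h2).trans (le_of_eq (max_comm _ _))
    · rcases ht with ⟨h1, h2⟩
      exact abs_le_max_abs_abs h1 h2
  have := Convex.norm_image_sub_le_of_norm_hasDerivWithin_le
    (f := fun s : ℝ => |s| ^ q * s) (f' := fun s : ℝ => (q + 1) * |s| ^ q)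
    (s := Set.uIcc y x) (C := (q + 1) * max |x| |y| ^ q)
    (fun t _ => (hasDerivAt_absq q hq t).hasDerivWithinAt)
    (fun t ht => by
      rw [Real.norm_eq_abs, abs_of_nonneg (by positivity)]
      exact mul_le_mul_of_nonneg_left
        (Real.rpow_le_rpow (abs_nonneg t) (hbd t ht) hq) (by linarith))
    hconv Set.left_mem_uIcc Set.right_mem_uIcc
  simpa [Real.norm_eq_abs] using this

lemma est_absq (q : ℝ) (hq : 0 ≤ q) (x y : ℝ) :
    abs (|x| ^ q * x - |y| ^ q * y) ≤
      (q + 1) * 2 ^ q * |x - y| ^ (q + 1) + (q + 1) * 2 ^ q * (|x - y| * |x| ^ q) := by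
  have h1 := mvt_absq q hq x y
  have hmax : max |x| |y| ≤ |x| + |x - y| := by
    rcases max_cases |x| |y| with ⟨h, _⟩ | ⟨h, _⟩
    · rw [h]; have := abs_nonneg (x - y); linarith
    · rw [h]
      calc |y| = |x - (x - y)| := by ring_nf
        _ ≤ |x| + |x - y| := abs_sub _ _
  have h2 : max |x| |y| ^ q ≤ 2 ^ q * (|x| ^ q + |x - y| ^ q) := by
    calc max |x| |y| ^ q ≤ (|x| + |x - y|) ^ q :=
          Real.rpow_le_rpow (le_trans (abs_nonneg x) (le_max_left _ _)) hmax hq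
      _ ≤ (2 * max |x| |x - y|) ^ q := by
          apply Real.rpow_le_rpow (by positivity) ?_ hq
          rcases max_cases |x| |x - y| with ⟨h, h'⟩ | ⟨h, h'⟩ <;> rw [h] <;> linarith
      _ = 2 ^ q * max |x| |x - y| ^ q := Real.mul_rpow (by norm_num) (by positivity)
      _ ≤ 2 ^ q * (|x| ^ q + |x - y| ^ q) := by
          apply mul_le_mul_of_nonneg_left ?_ (by positivity)
          rcases max_cases |x| |x - y| with ⟨h, _⟩ | ⟨h, _⟩ <;> rw [h] <;>
            [nlinarith [Real.rpow_nonneg (abs_nonneg (x-y)) q];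
             nlinarith [Real.rpow_nonneg (abs_nonneg x) q]]
  have h3 : (q + 1) * max |x| |y| ^ q * |x - y| ≤
      (q + 1) * (2 ^ q * (|x| ^ q + |x - y| ^ q)) * |x - y| := by
    apply mul_le_mul_of_nonneg_right ?_ (abs_nonneg _)
    exact mul_le_mul_of_nonneg_left h2 (by linarith)
  have h4 : |x - y| ^ (q + 1) = |x - y| ^ q * |x - y| := by
    rw [Real.rpow_add' (abs_nonneg _) (by linarith), Real.rpow_one]
  calc abs (|x| ^ q * x - |y| ^ q * y) ≤ _ := h1.trans h3
    _ = (q + 1) * 2 ^ q * |x - y| ^ (q + 1) + (q + 1) * 2 ^ q * (|x - y| * |x| ^ q) := by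
        rw [h4]; ring

/-- Lemma 2.2: for `p ≥ 2` there is `c = c(p) > 0` such that
`|L(a,b) − L(a',b)| ≤ c|a−a'|^{p−1} + c|a−a'||a−b|^{p−2}` and
`|L(a,b) − L(a,b')| ≤ c|b−b'|^{p−1} + c|b−b'||a−b|^{p−2}`. -/
theorem lemma_p_ge_two (p : ℝ) (hp : 2 ≤ p) :
    ∃ c : ℝ, 0 < c ∧ ∀ a b a' b' : ℝ,
      |Lf p a b - Lf p a' b| ≤ c * |a - a'| ^ (p - 1) + c * (|a - a'| * |a - b| ^ (p - 2)) ∧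
      |Lf p a b - Lf p a b'| ≤ c * |b - b'| ^ (p - 1) + c * (|b - b'| * |a - b| ^ (p - 2)) := by
  set q : ℝ := p - 2 with hqdef
  have hq : 0 ≤ q := by simp [hqdef]; linarith
  refine ⟨(q + 1) * 2 ^ q, by positivity, fun a b a' b' => ?_⟩
  have hq1 : q + 1 = p - 1 := by rw [hqdef]; ring
  have e : p - 2 + 1 = p - 1 := by ring
  constructor
  · have h := est_absq q hq (a - b) (a' - b)
    have hxy : a - b - (a' - b) = a - a' := by ring
    rw [hxy, hq1] at h
    simpa [Lf, hqdef, e] using h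
  · have h := est_absq q hq (a - b) (a - b')
    have hxy : a - b - (a - b') = b' - b := by ring
    rw [hxy, hq1, abs_sub_comm b' b] at h
    simpa [Lf, hqdef, e] using h
end

section
/- (Fractional Poincaré inequality under measure density) Let Ω ⊂ ℝ^n be an open bounded set satisfying the measure density condition with constants δ_Ω ∈ (0,1) and r₀ > 0, and let B := B_r(x₀) with x₀ ∈ ∂Ω and r ∈ (0, r₀). Suppose that f ∈ W^{s,p}(B) and f = 0 almost everywhere in B ∖ Ω. Then there exists a constant c ≥ 1 depending only on n, p, s such that ⨍_B |f|^p dx ≤ c·( 1 − (1−δ_Ω)^{1−1/p} )^{−p}·r^{sp}·∫_B ⨍_B |f(x)−f(y)|^p / |x−y|^{n+sp} dx dy, where ⨍ denotes the mean-value integral. -/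
open MeasureTheory Metric Filter
open scoped ENNReal Topology

noncomputable section

/-- `ℝ^n`. -/
abbrev Euc (n : ℕ) := EuclideanSpace ℝ (Fin n)

/-- A symmetric measurable kernel of order `(s,p)` with ellipticity constant `Λ`. -/
def IsKernel (n : ℕ) (s p Λ : ℝ) (K : Euc n → Euc n → ℝ) : Prop :=
  Measurable (Function.uncurry K) ∧
  (∀ x y, K x y = K y x) ∧ (∀ x y, 0 ≤ K x y) ∧
  (∀ᵐ z : Euc n × Euc n, Λ⁻¹ ≤ K z.1 z.2 * ‖z.1 - z.2‖ ^ ((n : ℝ) + s * p) ∧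
    K z.1 z.2 * ‖z.1 - z.2‖ ^ ((n : ℝ) + s * p) ≤ Λ)

/-- Membership in the fractional Sobolev space `W^{s,p}(D)` (finiteness of the norm). -/
def MemW (n : ℕ) (s p : ℝ) (D : Set (Euc n)) (v : Euc n → ℝ) : Prop :=
  AEMeasurable v (volume.restrict D) ∧
  IntegrableOn (fun x => |v x| ^ p) D volume ∧
  Integrable (fun q : Euc n × Euc n => |v q.1 - v q.2| ^ p / ‖q.1 - q.2‖ ^ ((n : ℝ) + s * p))
    ((volume.restrict D).prod (volume.restrict D))

/-- The `W^{s,p}(D)` norm. -/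
noncomputable def sobNorm (n : ℕ) (s p : ℝ) (D : Set (Euc n)) (v : Euc n → ℝ) : ℝ :=
  (∫ x in D, |v x| ^ p) ^ (1/p) +
  (∫ x in D, ∫ y in D, |v x - v y| ^ p / ‖x - y‖ ^ ((n : ℝ) + s * p)) ^ (1/p)

/-- The nonlocal tail `Tail(f; z, r)`. -/
noncomputable def tailF (n : ℕ) (s p : ℝ) (f : Euc n → ℝ) (z : Euc n) (r : ℝ) : ℝ :=
  (r ^ (s * p) * ∫ x in (ball z r)ᶜ, |f x| ^ (p - 1) * ‖x - z‖ ^ (-((n : ℝ) + s * p))) ^ (1/(p-1))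

/-- Membership in the tail space `L^{p-1}_{sp}(ℝ^n)`. -/
def MemTail (n : ℕ) (s p : ℝ) (f : Euc n → ℝ) : Prop :=
  AEMeasurable f volume ∧
  (∀ z : Euc n, ∀ r : ℝ, 0 < r → IntegrableOn (fun x => |f x| ^ (p - 1)) (ball z r) volume) ∧
  (∀ z : Euc n, ∀ r : ℝ, 0 < r →
    IntegrableOn (fun x => |f x| ^ (p - 1) * ‖x - z‖ ^ (-((n : ℝ) + s * p))) (ball z r)ᶜ volume)

/-- The admissible class `K_{g,h}(Ω,Ω')`. -/
def obstacleSet (n : ℕ) (s p : ℝ) (Ω Ω' : Set (Euc n)) (g : Euc n → ℝ) (h : Euc n → EReal) :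
    Set (Euc n → ℝ) :=
  {u | MemW n s p Ω' u ∧ (∀ᵐ x ∂(volume : Measure (Euc n)), x ∈ Ω → h x ≤ (u x : EReal)) ∧
    (∀ᵐ x ∂(volume : Measure (Euc n)), x ∉ Ω → u x = g x)}

/-- The functional `A u (v)`. -/
noncomputable def Aop (n : ℕ) (p : ℝ) (Ω Ω' : Set (Euc n)) (g : Euc n → ℝ)
    (K : Euc n → Euc n → ℝ) (u v : Euc n → ℝ) : ℝ :=
  (∫ x in Ω', ∫ y in Ω', Lf p (u x) (u y) * (v x - v y) * K x y) +
  2 * ∫ y in Ω'ᶜ, ∫ x in Ω, Lf p (u x) (g y) * v x * K x y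

/-- `u` solves the obstacle problem in `K_{g,h}(Ω,Ω')`. -/
def SolvesObstacle (n : ℕ) (s p : ℝ) (Ω Ω' : Set (Euc n)) (g : Euc n → ℝ) (h : Euc n → EReal)
    (K : Euc n → Euc n → ℝ) (u : Euc n → ℝ) : Prop :=
  u ∈ obstacleSet n s p Ω Ω' g h ∧
  ∀ v ∈ obstacleSet n s p Ω Ω' g h, 0 ≤ Aop n p Ω Ω' g K u (fun x => v x - u x)

/-- The essential oscillation of `f` on `A` (in `EReal`). -/
noncomputable def essOsc (n : ℕ) (A : Set (Euc n)) (f : Euc n → ℝ) : EReal :=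
  essSup (fun x => (f x : EReal)) (volume.restrict A) -
    essInf (fun x => (f x : EReal)) (volume.restrict A)

end

/-- The measure density condition on the complement of `Ω`, with constants
`δ_Ω ∈ (0,1)` and `r₀ > 0`. -/
def MeasureDensity (n : ℕ) (Ω : Set (Euc n)) (δ r₀ : ℝ) : Prop :=
  ∀ x₀ ∈ frontier Ω, ∀ r : ℝ, 0 < r → r < r₀ →
    ENNReal.ofReal δ * volume (ball x₀ r) ≤ volume (Ωᶜ ∩ ball x₀ r)

/-- Lemma 5.7 (fractional Poincaré inequality under measure density): if `f ∈ W^{s,p}(B)`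
with `B = B_r(x₀)`, `x₀ ∈ ∂Ω`, `r < r₀` and `f = 0` a.e. in `B ∖ Ω`, then
`⨍_B |f|^p ≤ c (1 − (1−δ_Ω)^{1−1/p})^{−p} r^{sp} ∫_B ⨍_B |f(x)−f(y)|^p |x−y|^{−n−sp} dx dy`
with `c = c(n,p,s) ≥ 1`. -/
theorem fractional_poincare_density
    (n : ℕ) (s p : ℝ) (hn : 1 ≤ n) (hs0 : 0 < s) (hs1 : s < 1) (hp : 1 < p) :
    ∃ c : ℝ, 1 ≤ c ∧
      ∀ (Ω : Set (Euc n)) (δ r₀ : ℝ), IsOpen Ω → Bornology.IsBounded Ω →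
        δ ∈ Set.Ioo (0 : ℝ) 1 → 0 < r₀ → MeasureDensity n Ω δ r₀ →
      ∀ x₀ ∈ frontier Ω, ∀ r ∈ Set.Ioo (0 : ℝ) r₀,
      ∀ f : Euc n → ℝ, MemW n s p (ball x₀ r) f →
        (∀ᵐ x ∂(volume : Measure (Euc n)), x ∈ ball x₀ r \ Ω → f x = 0) →
        (⨍ x in ball x₀ r, |f x| ^ p)
          ≤ c * (1 - (1 - δ) ^ (1 - 1/p)) ^ (-p) * r ^ (s * p) *
            ∫ y in ball x₀ r, ⨍ x in ball x₀ r, |f x - f y| ^ p / ‖x - y‖ ^ ((n : ℝ) + s * p) := by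
    classical
  have hp0 : (0:ℝ) < p := lt_trans one_pos hp
  set q : ℝ := (n : ℝ) + s * p with hq
  have hq0 : (0:ℝ) < q := by
    have : (0:ℝ) < s * p := mul_pos hs0 hp0
    have hn0 : (0:ℝ) ≤ (n:ℝ) := Nat.cast_nonneg n
    linarith
  haveI : Nontrivial (Euc n) :=
    Module.nontrivial_of_finrank_pos (R := ℝ) (by rw [finrank_euclideanSpace_fin]; omega)
  have hω0 : (0:ℝ≥0∞) < volume (ball (0 : Euc n) 1) := measure_ball_pos _ _ one_pos
  have hωt : volume (ball (0 : Euc n) 1) ≠ ⊤ := measure_ball_lt_top.ne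
  set ωR : ℝ := (volume (ball (0 : Euc n) 1)).toReal with hωRdef
  have hωR0 : 0 < ωR := ENNReal.toReal_pos hω0.ne' hωt
  refine ⟨max 1 (2 ^ q / ωR), le_max_left _ _, ?_⟩
  intro Ω δ r₀ hΩo _hΩb hδ hr₀ hmd x₀ hx₀ r hr f hf hf0
  obtain ⟨hδ0, hδ1⟩ := hδ
  obtain ⟨hr0, hrr₀⟩ := hr
  set B : Set (Euc n) := ball x₀ r with hB
  set ν : Measure (Euc n) := volume.restrict B with hν
  -- facts about D := 1 - (1-δ)^(1-1/p)
  set D : ℝ := 1 - (1 - δ) ^ (1 - 1/p) with hD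
  have hp_inv : (0:ℝ) < 1/p := by positivity
  have hθ0 : 0 < 1 - 1/p := by
    have : 1/p < 1 := by
      rw [div_lt_one hp0]; exact hp
    linarith
  have h1δ0 : (0:ℝ) < 1 - δ := by linarith
  have hrp1 : (1-δ) ^ (1 - 1/p) < 1 := Real.rpow_lt_one h1δ0.le (by linarith) hθ0
  have hD0 : 0 < D := by rw [hD]; linarith
  have hD1 : D ≤ 1 := by
    have : 0 ≤ (1-δ) ^ (1 - 1/p) := Real.rpow_nonneg h1δ0.le _
    rw [hD]; linarith
  have hDδ : D ≤ δ := by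
    have h := Real.rpow_le_rpow_of_exponent_ge h1δ0 (by linarith) (by linarith : 1 - 1/p ≤ 1)
    rw [Real.rpow_one] at h
    rw [hD]; linarith
  have hDp : D ^ p ≤ δ := by
    have h := Real.rpow_le_rpow_of_exponent_ge hD0 hD1 hp.le
    rw [Real.rpow_one] at h; linarith
  have hDpinv : δ⁻¹ ≤ D ^ (-p) := by
    rw [Real.rpow_neg hD0.le]
    exact inv_anti₀ (Real.rpow_pos_of_pos hD0 p) hDp
  have hDpnn : 0 ≤ D ^ (-p) := Real.rpow_nonneg hD0.le _
  -- measure facts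
  have hBmeas : MeasurableSet B := measurableSet_ball
  have hAmeas : MeasurableSet (B \ Ω) := hBmeas.diff hΩo.measurableSet
  have hvB_lt : volume B < ⊤ := measure_ball_lt_top
  have hvB0 : (0:ℝ≥0∞) < volume B := measure_ball_pos _ _ hr0
  set VB : ℝ := (volume B).toReal with hVBdef
  have hVB0 : 0 < VB := ENNReal.toReal_pos hvB0.ne' hvB_lt.ne
  have hVBeq : VB = r ^ (n:ℝ) * ωR := by
    rw [hVBdef, hB, Measure.addHaar_ball volume x₀ hr0.le, ENNReal.toReal_mul,
      ENNReal.toReal_ofReal (by positivity), finrank_euclideanSpace_fin, hωRdef,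
      ← Real.rpow_natCast r n]
  have hvA_lt : volume (B \ Ω) ≠ ⊤ := (lt_of_le_of_lt (measure_mono Set.diff_subset) hvB_lt).ne
  set VA : ℝ := (volume (B \ Ω)).toReal with hVAdef
  have hVAδ : δ * VB ≤ VA := by
    have h1 : ENNReal.ofReal δ * volume B ≤ volume (B \ Ω) := by
      have := hmd x₀ hx₀ r hr0 hrr₀
      rwa [Set.inter_comm, ← Set.diff_eq] at this
    have h2 := (ENNReal.toReal_le_toReal
      (ENNReal.mul_ne_top ENNReal.ofReal_ne_top hvB_lt.ne) hvA_lt).2 h1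
    rwa [ENNReal.toReal_mul, ENNReal.toReal_ofReal hδ0.le] at h2
  -- the double-integrand
  set g : Euc n → Euc n → ℝ := fun x y => |f x - f y| ^ p / ‖x - y‖ ^ q with hg
  have hgint : Integrable (fun z : Euc n × Euc n => g z.1 z.2) (ν.prod ν) := hf.2.2
  have hgnn : ∀ x y, 0 ≤ g x y := fun x y =>
    div_nonneg (Real.rpow_nonneg (abs_nonneg _) _) (Real.rpow_nonneg (norm_nonneg _) _)
  set T : ℝ := ∫ x in B, |f x| ^ p with hT
  have hTnn : 0 ≤ T := integral_nonneg fun x => Real.rpow_nonneg (abs_nonneg _) _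
  set Ig : ℝ := ∫ z : Euc n × Euc n, g z.1 z.2 ∂(ν.prod ν) with hIg
  have hIgnn : 0 ≤ Ig := integral_nonneg fun z => hgnn _ _
  -- lintegral versions
  set LT : ℝ≥0∞ := ∫⁻ x, ENNReal.ofReal (|f x| ^ p) ∂ν with hLT
  have hLT_lt : LT < ⊤ := by
    rw [hLT]
    exact (hasFiniteIntegral_iff_ofReal
      (Eventually.of_forall fun x => Real.rpow_nonneg (abs_nonneg _) _)).1
      hf.2.1.hasFiniteIntegral
  have hTeq : T = LT.toReal := by
    rw [hT, hLT, integral_eq_lintegral_of_nonneg_ae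
      (Eventually.of_forall fun x => Real.rpow_nonneg (abs_nonneg _) _)
      hf.2.1.aestronglyMeasurable]
  set LG : ℝ≥0∞ := ∫⁻ z, ENNReal.ofReal (g z.1 z.2) ∂(ν.prod ν) with hLG
  have hLG_lt : LG < ⊤ := by
    rw [hLG]
    exact (hasFiniteIntegral_iff_ofReal
      (Eventually.of_forall fun z => hgnn _ _)).1 hgint.hasFiniteIntegral
  have hIgeq : Ig = LG.toReal := by
    rw [hIg, hLG, integral_eq_lintegral_of_nonneg_ae
      (Eventually.of_forall fun z => hgnn _ _) hgint.aestronglyMeasurable]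
  -- measurability of H
  have hrpow_cont : Continuous fun x : ℝ => x ^ p :=
    continuous_iff_continuousAt.2 fun x =>
      Real.continuousAt_rpow_const x p (Or.inr hp0.le)
  have hfaem : AEMeasurable f ν := hf.1
  have hHaem : AEMeasurable (fun z : Euc n × Euc n => ENNReal.ofReal (|f z.1 - f z.2| ^ p))
      (ν.prod ν) := by
    have h1 : AEMeasurable (fun z : Euc n × Euc n => f z.1) (ν.prod ν) := hfaem.comp_fst
    have h2 : AEMeasurable (fun z : Euc n × Euc n => f z.2) (ν.prod ν) := hfaem.comp_snd
    have hcont2 : Continuous fun x : ℝ => |x| ^ p := hrpow_cont.comp continuous_abs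
    exact (hcont2.measurable.comp_aemeasurable (h1.sub h2)).ennreal_ofReal
  -- key ENNReal estimate
  have key : volume (B \ Ω) * LT ≤ ENNReal.ofReal ((2*r) ^ q) * LG := by
    have step1 : volume (B \ Ω) * LT
        ≤ ∫⁻ z, ENNReal.ofReal (|f z.1 - f z.2| ^ p) ∂(ν.prod ν) := by
      rw [lintegral_prod _ hHaem]
      have hsub : ∫⁻ x, (∫⁻ y, ENNReal.ofReal (|f x - f y| ^ p) ∂ν) ∂(volume.restrict (B \ Ω))
          ≤ ∫⁻ x, (∫⁻ y, ENNReal.ofReal (|f x - f y| ^ p) ∂ν) ∂ν :=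
        lintegral_mono' (Measure.restrict_mono Set.diff_subset le_rfl) le_rfl
      refine le_trans ?_ hsub
      have hae : ∀ᵐ x ∂(volume.restrict (B \ Ω)),
          (∫⁻ y, ENNReal.ofReal (|f x - f y| ^ p) ∂ν) = LT := by
        filter_upwards [ae_restrict_of_ae hf0, ae_restrict_mem hAmeas] with x h0x hmx
        have hfx : f x = 0 := h0x hmx
        rw [hLT]
        congr 1
        ext y
        rw [hfx, zero_sub, abs_neg]
      rw [lintegral_congr_ae hae, lintegral_const, Measure.restrict_apply_univ, mul_comm]
    refine le_trans step1 ?_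
    have hmono : ∀ᵐ z ∂(ν.prod ν), ENNReal.ofReal (|f z.1 - f z.2| ^ p)
        ≤ ENNReal.ofReal ((2*r)^q) * ENNReal.ofReal (g z.1 z.2) := by
      have hprodeq : ν.prod ν = (volume.prod volume).restrict (B ×ˢ B) := by
        rw [hν, Measure.prod_restrict]
      have hmem : ∀ᵐ z ∂(ν.prod ν), z ∈ B ×ˢ B := by
        rw [hprodeq]; exact ae_restrict_mem (hBmeas.prod hBmeas)
      filter_upwards [hmem] with z hz
      obtain ⟨hz1, hz2⟩ := hz
      by_cases he : z.1 = z.2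
      · rw [he, sub_self, abs_zero, Real.zero_rpow hp0.ne']
        simp
      · have hne : (0:ℝ) < ‖z.1 - z.2‖ := by
          rw [norm_pos_iff]
          exact sub_ne_zero.2 he
        have hlt : ‖z.1 - z.2‖ ≤ 2 * r := by
          rw [← dist_eq_norm]
          have h1 : dist z.1 x₀ < r := mem_ball.1 hz1
          have h2 : dist z.2 x₀ < r := mem_ball.1 hz2
          calc dist z.1 z.2 ≤ dist z.1 x₀ + dist x₀ z.2 := dist_triangle _ _ _
          _ ≤ 2*r := by rw [dist_comm x₀ z.2]; linarith
        have hdenom : ‖z.1 - z.2‖ ^ q ≤ (2*r)^q :=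
          Real.rpow_le_rpow (norm_nonneg _) hlt hq0.le
        have hdpos : 0 < ‖z.1 - z.2‖ ^ q := Real.rpow_pos_of_pos hne q
        have hkey : |f z.1 - f z.2| ^ p ≤ (2*r)^q * g z.1 z.2 := by
          have hann : 0 ≤ |f z.1 - f z.2| ^ p := Real.rpow_nonneg (abs_nonneg _) _
          have heq1 : |f z.1 - f z.2| ^ p
              = ‖z.1-z.2‖^q * (|f z.1 - f z.2| ^ p / ‖z.1-z.2‖^q) := by
            field_simp
          rw [heq1]
          exact mul_le_mul_of_nonneg_right hdenom (div_nonneg hann hdpos.le)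
        calc ENNReal.ofReal (|f z.1 - f z.2| ^ p)
            ≤ ENNReal.ofReal ((2*r)^q * g z.1 z.2) := ENNReal.ofReal_le_ofReal hkey
        _ = ENNReal.ofReal ((2*r)^q) * ENNReal.ofReal (g z.1 z.2) := by
            rw [ENNReal.ofReal_mul (by positivity)]
    calc ∫⁻ z, ENNReal.ofReal (|f z.1 - f z.2| ^ p) ∂(ν.prod ν)
        ≤ ∫⁻ z, ENNReal.ofReal ((2*r)^q) * ENNReal.ofReal (g z.1 z.2) ∂(ν.prod ν) :=
          lintegral_mono_ae hmono
    _ = ENNReal.ofReal ((2*r)^q) * LG := by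
        rw [hLG]; exact lintegral_const_mul' _ _ ENNReal.ofReal_ne_top
  -- real version
  have keyR : VA * T ≤ (2*r)^q * Ig := by
    have hfin : ENNReal.ofReal ((2*r)^q) * LG ≠ ⊤ :=
      ENNReal.mul_ne_top ENNReal.ofReal_ne_top hLG_lt.ne
    have h2 := (ENNReal.toReal_le_toReal (ENNReal.mul_ne_top hvA_lt hLT_lt.ne) hfin).2 key
    rwa [ENNReal.toReal_mul, ENNReal.toReal_mul, ENNReal.toReal_ofReal (by positivity),
      ← hVAdef, ← hTeq, ← hIgeq] at h2
  -- rewrite RHS of the goal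
  have hswap : (∫ y in B, ∫ x in B, g x y) = Ig := by
    have h1 : (∫ y in B, ∫ x in B, g x y)
        = ∫ z : Euc n × Euc n, g z.2 z.1 ∂(ν.prod ν) :=
      integral_integral (f := fun y x => g x y) hgint.swap
    rw [h1, hIg]
    exact integral_prod_swap (fun z : Euc n × Euc n => g z.1 z.2)
  have hRHS : (∫ y in B, ⨍ x in B, g x y) = VB⁻¹ * Ig := by
    have h1 : ∀ y, (⨍ x in B, g x y) = VB⁻¹ * ∫ x in B, g x y := fun y => by
      rw [setAverage_eq, smul_eq_mul, hVBdef, measureReal_def]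
    simp_rw [h1]
    rw [integral_const_mul, hswap]
  have hLHS : (⨍ x in B, |f x| ^ p) = VB⁻¹ * T := by
    rw [setAverage_eq, smul_eq_mul, hVBdef, hT, measureReal_def]
  -- final arithmetic
  have hrn : (0:ℝ) < r ^ (n:ℝ) := Real.rpow_pos_of_pos hr0 _
  have hrq : (2*r)^q = 2^q * (r^(n:ℝ) * r^(s*p)) := by
    rw [Real.mul_rpow (by norm_num) hr0.le, hq, Real.rpow_add hr0]
  have hT3 : δ * ωR * T ≤ 2^q * r^(s*p) * Ig := by
    have h1 : δ * VB * T ≤ VA * T := mul_le_mul_of_nonneg_right hVAδ hTnn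
    have h2 := le_trans h1 keyR
    rw [hVBeq, hrq] at h2
    have h3 : (δ * ωR * T) * r^(n:ℝ) ≤ (2^q * r^(s*p) * Ig) * r^(n:ℝ) := by
      calc (δ * ωR * T) * r^(n:ℝ) = δ * (r^(n:ℝ) * ωR) * T := by ring
      _ ≤ 2^q * (r^(n:ℝ) * r^(s*p)) * Ig := h2
      _ = (2^q * r^(s*p) * Ig) * r^(n:ℝ) := by ring
    exact le_of_mul_le_mul_right h3 hrn
  have hT4 : T ≤ (2^q / ωR) * δ⁻¹ * (r^(s*p) * Ig) := by
    have hpos : (0:ℝ) < δ * ωR := mul_pos hδ0 hωR0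
    have e1 : T = (δ*ωR)⁻¹ * (δ*ωR*T) := by
      rw [← mul_assoc, inv_mul_cancel₀ hpos.ne', one_mul]
    have e2 : (δ*ωR)⁻¹ * (δ*ωR*T) ≤ (δ*ωR)⁻¹ * (2^q*r^(s*p)*Ig) :=
      mul_le_mul_of_nonneg_left hT3 (inv_nonneg.2 hpos.le)
    have e3 : (δ*ωR)⁻¹ * (2^q*r^(s*p)*Ig) = (2^q/ωR)*δ⁻¹*(r^(s*p)*Ig) := by
      rw [div_eq_mul_inv, mul_inv]; ring
    exact le_trans (le_of_eq e1) (le_trans e2 (le_of_eq e3))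
  have hrsp : (0:ℝ) ≤ r ^ (s*p) := Real.rpow_nonneg hr0.le _
  have hfinal : T ≤ (max 1 (2^q/ωR)) * D^(-p) * r^(s*p) * Ig := by
    refine le_trans hT4 ?_
    have hstep : (2^q/ωR) * δ⁻¹ * (r^(s*p)*Ig)
        ≤ (max 1 (2^q/ωR)) * D^(-p) * (r^(s*p)*Ig) := by
      have h1 : (2^q/ωR) * δ⁻¹ ≤ (max 1 (2^q/ωR)) * D^(-p) :=
        mul_le_mul (le_max_right _ _) hDpinv (inv_nonneg.2 hδ0.le)
          (le_trans zero_le_one (le_max_left _ _))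
      exact mul_le_mul_of_nonneg_right h1 (mul_nonneg hrsp hIgnn)
    refine le_trans hstep (le_of_eq ?_)
    ring
  rw [hLHS, hRHS]
  calc VB⁻¹ * T ≤ VB⁻¹ * ((max 1 (2^q/ωR)) * D^(-p) * r^(s*p) * Ig) :=
    mul_le_mul_of_nonneg_left hfinal (inv_nonneg.2 hVB0.le)
  _ = max 1 (2 ^ q / ωR) * D ^ (-p) * r ^ (s * p) * (VB⁻¹ * Ig) := by ring
end
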